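/- Let N be a positive integer, a ∈ (0,1/2) be such that m := aN/4 is a positive integer, and let P > 0 satisfy P ≤ N and aP > 256. Consider a random graph on a vertex set 𝒮 of size m in which each unordered pair of distinct vertices is an edge independently with probability P/N. For A ⊆ 𝒮 write ρ_A = |A|/m and L_A for the number of edges with one endpoint in A and the other in 𝒮∖A. Then there exists a constant ρ₀ ∈ (1/4,1/2), independent of N, a and P, such that the probability that there exists A ⊆ 𝒮 with ρ_A ∈ [ρ₀, 1−ρ₀] and L_A < ρ_A(1−ρ_A)·a²·P·N/32 is at most N·exp(−ρ₀·a·N/4). -/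

import Mathlib

open MeasureTheory ProbabilityTheory Finset
open scoped ENNReal

section aux

lemma bern_exp_eq {Ω : Type*} (B : Ω → Bool) (t : ℝ) :
    (fun ω => Real.exp (t * if B ω then (1:ℝ) else 0))
      = fun ω => 1 + (Real.exp t - 1) * (if B ω then 1 else 0) := by
  funext ω; by_cases h : B ω <;> simp [h]

lemma bern_ind_eq {Ω : Type*} (B : Ω → Bool) :
    (fun ω => if B ω then (1:ℝ) else 0)
      = Set.indicator {ω | B ω = true} (fun _ => 1) := by
  funext ω; by_cases h : B ω <;> simp [Set.indicator, h]

lemma bern_int {Ω : Type*} [MeasurableSpace Ω] (μ : Measure Ω) [IsProbabilityMeasure μ]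
    (B : Ω → Bool) (hB : Measurable B) :
    Integrable (fun ω => if B ω then (1:ℝ) else 0) μ := by
  rw [bern_ind_eq]
  exact (integrable_const 1).indicator (hB (measurableSet_singleton true))

lemma bern_exp_int {Ω : Type*} [MeasurableSpace Ω] (μ : Measure Ω) [IsProbabilityMeasure μ]
    (B : Ω → Bool) (hB : Measurable B) (t : ℝ) :
    Integrable (fun ω => Real.exp (t * if B ω then (1:ℝ) else 0)) μ := by
  rw [bern_exp_eq]
  exact (integrable_const 1).add ((bern_int μ B hB).const_mul _)

lemma bern_mgf {Ω : Type*} [MeasurableSpace Ω] (μ : Measure Ω) [IsProbabilityMeasure μ]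
    (B : Ω → Bool) (hB : Measurable B) (p t : ℝ) (hp : 0 ≤ p)
    (hμB : μ {ω | B ω = true} = ENNReal.ofReal p) :
    mgf (fun ω => if B ω then (1:ℝ) else 0) μ t = 1 + p * (Real.exp t - 1) := by
  have hs : MeasurableSet {ω | B ω = true} := hB (measurableSet_singleton true)
  have hI : ∫ ω, (if B ω then (1:ℝ) else 0) ∂μ = p := by
    rw [bern_ind_eq, integral_indicator_const _ hs, measureReal_def, hμB, ENNReal.toReal_ofReal hp,
      smul_eq_mul, mul_one]
  unfold mgf
  rw [bern_exp_eq, integral_add (integrable_const 1) ((bern_int μ B hB).const_mul _),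
    integral_const, integral_const_mul, hI]
  simp [mul_comm]

open scoped Classical in
noncomputable def EA {m : ℕ} (A : Finset (Fin m)) : Finset (Sym2 (Fin m)) :=
  Finset.univ.filter (fun e : Sym2 (Fin m) => ∃ i ∈ A, ∃ j ∉ A, e = s(i, j))

lemma EA_nondiag {m : ℕ} (A : Finset (Fin m)) {e : Sym2 (Fin m)} (he : e ∈ EA A) :
    ¬ e.IsDiag := by
  classical
  simp only [EA, Finset.mem_filter] at he
  obtain ⟨-, i, hi, j, hj, rfl⟩ := he
  rw [Sym2.mk_isDiag_iff]
  rintro rfl; exact hj hi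

lemma EA_card {m : ℕ} (A : Finset (Fin m)) :
    (EA A).card = A.card * (m - A.card) := by
  classical
  have himg : EA A = (A ×ˢ Aᶜ).image (fun x : Fin m × Fin m => s(x.1, x.2)) := by
    ext e
    simp only [EA, Finset.mem_filter, Finset.mem_univ, true_and, Finset.mem_image,
      Finset.mem_product, Finset.mem_compl]
    constructor
    · rintro ⟨i, hi, j, hj, rfl⟩; exact ⟨(i, j), ⟨hi, hj⟩, rfl⟩
    · rintro ⟨⟨i, j⟩, ⟨hi, hj⟩, rfl⟩; exact ⟨i, hi, j, hj, rfl⟩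
  rw [himg, Finset.card_image_of_injOn, Finset.card_product, Finset.card_compl,
    Fintype.card_fin]
  rintro ⟨i, j⟩ hij ⟨i', j'⟩ hij' h
  simp only [Finset.coe_product, Set.mem_prod, Finset.mem_coe, Finset.mem_compl] at hij hij'
  rcases Sym2.eq_iff.mp h with ⟨h1, h2⟩ | ⟨h1, h2⟩
  · exact Prod.ext h1 h2
  · exact absurd (show j' ∈ A from (show i = j' from h1) ▸ hij.1) hij'.2

lemma thr_aux (k m N Pr : ℝ) (hmne : m ≠ 0) (hNne : N ≠ 0) :
    (k / m) * (1 - k / m) * (4 * m / N) ^ 2 * Pr * N / 32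
      = k * (m - k) * (Pr / N) / 2 := by
  field_simp
  ring

end aux

/-- The number of edges between `A ⊆ 𝒮` and its complement, in the configuration `ω`:
the number of unordered pairs `{i,j}` with `i ∈ A`, `j ∉ A` whose edge is present. -/
noncomputable def crossEdges {m : ℕ} {Ω : Type*} (X : Sym2 (Fin m) → Ω → Bool)
    (A : Finset (Fin m)) (ω : Ω) : ℕ :=
  Set.ncard {e : Sym2 (Fin m) | (∃ i ∈ A, ∃ j ∉ A, e = s(i, j)) ∧ X e ω = true}

/-- Static core of Proposition `catorbound`: in an Erdős–Rényi graph on `m = aN/4` vertices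
with edge probability `P/N`, provided `aP > 256`, there is a universal `ρ₀ ∈ (1/4,1/2)` such
that with probability at least `1 - N e^{-ρ₀ a N / 4}` every `A ⊆ 𝒮` with
`ρ_A ∈ [ρ₀, 1-ρ₀]` has at least `ρ_A (1-ρ_A) a² P N / 32` cross edges. -/
lemma crossEdges_sum {m : ℕ} {Ω : Type*} (X : Sym2 (Fin m) → Ω → Bool)
    (A : Finset (Fin m)) (ω : Ω) :
    (crossEdges X A ω : ℝ) = ∑ e ∈ EA A, (if X e ω then (1:ℝ) else 0) := by
  classical
  have h1 : {e : Sym2 (Fin m) | (∃ i ∈ A, ∃ j ∉ A, e = s(i, j)) ∧ X e ω = true}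
      = ↑((EA A).filter (fun e => X e ω = true)) := by
    ext e
    simp [EA, and_assoc]
  rw [crossEdges, h1, Set.ncard_coe_finset, Finset.card_filter]
  push_cast
  rfl

set_option maxHeartbeats 2000000 in
theorem stmt0 :
    ∃ ρ₀ : ℝ, ρ₀ ∈ Set.Ioo (1 / 4 : ℝ) (1 / 2) ∧
      ∀ (N : ℕ) (a Pr : ℝ) (m : ℕ) (Ω : Type) (_ : MeasurableSpace Ω) (μ : Measure Ω),
        IsProbabilityMeasure μ → 0 < N → 0 < a → a < 1 / 2 → 0 < m →
        (m : ℝ) = a * N / 4 → 0 < Pr → Pr ≤ N → 256 < a * Pr →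
        ∀ X : Sym2 (Fin m) → Ω → Bool,
        (∀ e, Measurable (X e)) →
        iIndepFun X μ →
        (∀ e : Sym2 (Fin m), ¬ e.IsDiag →
          μ {ω | X e ω = true} = ENNReal.ofReal (Pr / N)) →
        μ {ω | ∃ A : Finset (Fin m),
            ρ₀ ≤ (A.card : ℝ) / m ∧ (A.card : ℝ) / m ≤ 1 - ρ₀ ∧
            (crossEdges X A ω : ℝ) <
              ((A.card : ℝ) / m) * (1 - (A.card : ℝ) / m) * a ^ 2 * Pr * N / 32}
          ≤ ENNReal.ofReal (N * Real.exp (-ρ₀ * a * N / 4)) := by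

  classical
  refine ⟨3/10, by norm_num, ?_⟩
  intro N a Pr m Ω _ μ hμ hN ha ha2 hm hmN hPr hPrN haPr X hXmeas hXindep hXp
  have hN0 : (0:ℝ) < N := by exact_mod_cast hN
  have hm0 : (0:ℝ) < m := by exact_mod_cast hm
  set p : ℝ := Pr / N with hp
  have hp0 : 0 < p := div_pos hPr hN0
  have hp1 : p ≤ 1 := by rw [hp, div_le_one hN0]; exact hPrN
  set Z : Sym2 (Fin m) → Ω → ℝ := fun e ω => if X e ω then 1 else 0 with hZdef
  have hZmeas : ∀ e, Measurable (Z e) := fun e =>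
    (Measurable.of_discrete (f := fun b : Bool => if b then (1:ℝ) else 0)).comp (hXmeas e)
  have hZindep : iIndepFun Z μ :=
    hXindep.comp (fun _ b => if b then (1:ℝ) else 0) (fun _ => Measurable.of_discrete)
  set c : ℝ := 1/2 - Real.exp (-1) with hc
  have hc13 : (13/100 : ℝ) ≤ c := by
    have h1 : Real.exp (-1) ≤ 0.37 := by
      rw [Real.exp_neg]
      rw [inv_le_comm₀ (Real.exp_pos 1) (by norm_num)]
      nlinarith [Real.exp_one_gt_d9]
    rw [hc]; linarith
  -- per-A Chernoff bound
  have key : ∀ A : Finset (Fin m),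
      μ {ω | ∑ e ∈ EA A, Z e ω ≤ ((EA A).card : ℝ) * p / 2}
        ≤ ENNReal.ofReal (Real.exp (-c * (((EA A).card : ℝ) * p))) := by
    intro A
    set n := (EA A).card with hn
    have hIntS : Integrable (fun ω => Real.exp (-1 * (∑ e ∈ EA A, Z e) ω)) μ :=
      hZindep.integrable_exp_mul_sum hZmeas
        (fun e _ => bern_exp_int μ (X e) (hXmeas e) (-1))
    have hcher := measure_le_le_exp_mul_mgf (μ := μ) (X := ∑ e ∈ EA A, Z e)
      ((n : ℝ) * p / 2) (by norm_num : (-1:ℝ) ≤ 0) hIntS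
    rw [hZindep.mgf_sum hZmeas] at hcher
    have hprod : ∏ e ∈ EA A, mgf (Z e) μ (-1) = (1 + p * (Real.exp (-1) - 1)) ^ n := by
      rw [Finset.prod_congr rfl (fun e he => bern_mgf μ (X e) (hXmeas e) p (-1) hp0.le
        (hXp e (EA_nondiag A he))), Finset.prod_const]
    rw [hprod] at hcher
    have hbase0 : 0 ≤ 1 + p * (Real.exp (-1) - 1) := by
      nlinarith [Real.exp_pos (-1)]
    have hpow : (1 + p * (Real.exp (-1) - 1)) ^ n ≤ Real.exp (p * (Real.exp (-1) - 1)) ^ n :=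
      pow_le_pow_left₀ hbase0
        (by linarith [Real.add_one_le_exp (p * (Real.exp (-1) - 1))]) n
    have hexp : Real.exp (-(-1) * ((n:ℝ) * p / 2)) * Real.exp (p * (Real.exp (-1) - 1)) ^ n
        = Real.exp (-c * ((n:ℝ) * p)) := by
      rw [← Real.exp_nat_mul, ← Real.exp_add, hc]
      ring_nf
    have hfin : (μ {ω | (∑ e ∈ EA A, Z e) ω ≤ (n:ℝ) * p / 2}).toReal
        ≤ Real.exp (-c * ((n:ℝ) * p)) := by
      calc (μ {ω | (∑ e ∈ EA A, Z e) ω ≤ (n:ℝ) * p / 2}).toReal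
          ≤ Real.exp (-(-1) * ((n:ℝ) * p / 2)) * (1 + p * (Real.exp (-1) - 1)) ^ n := hcher
        _ ≤ Real.exp (-(-1) * ((n:ℝ) * p / 2)) * Real.exp (p * (Real.exp (-1) - 1)) ^ n := by
            have := Real.exp_pos (-(-1) * ((n:ℝ) * p / 2))
            nlinarith
        _ = Real.exp (-c * ((n:ℝ) * p)) := hexp
    have hset : {ω | ∑ e ∈ EA A, Z e ω ≤ (n:ℝ) * p / 2}
        = {ω | (∑ e ∈ EA A, Z e) ω ≤ (n:ℝ) * p / 2} := by
      simp [Finset.sum_apply]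
    rw [hset, ← ENNReal.ofReal_toReal (measure_ne_top μ _)]
    exact ENNReal.ofReal_le_ofReal hfin
  -- the family of "valid" subsets
  set T : Finset (Finset (Fin m)) := Finset.univ.filter
    (fun A => (3/10 : ℝ) ≤ (A.card : ℝ) / m ∧ (A.card : ℝ) / m ≤ 1 - 3/10) with hT
  -- cardinality facts for valid A
  have hEAcard : ∀ A : Finset (Fin m), ((EA A).card : ℝ) = A.card * ((m:ℝ) - A.card) := by
    intro A
    have hkm : A.card ≤ m := by
      simpa using A.card_le_univ
    rw [EA_card, Nat.cast_mul, Nat.cast_sub hkm]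
  have hthr : ∀ A : Finset (Fin m),
      ((A.card : ℝ) / m) * (1 - (A.card : ℝ) / m) * a ^ 2 * Pr * N / 32
        = ((EA A).card : ℝ) * p / 2 := by
    intro A
    have ha' : a = 4 * (m:ℝ) / N := by
      rw [eq_div_iff hN0.ne']; linarith [hmN]
    rw [hEAcard, hp, ha']
    exact thr_aux _ _ _ _ hm0.ne' hN0.ne'
  -- inclusion of the bad event in a finite union
  have hsub : {ω | ∃ A : Finset (Fin m),
        (3/10 : ℝ) ≤ (A.card : ℝ) / m ∧ (A.card : ℝ) / m ≤ 1 - 3/10 ∧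
        (crossEdges X A ω : ℝ) <
          ((A.card : ℝ) / m) * (1 - (A.card : ℝ) / m) * a ^ 2 * Pr * N / 32}
      ⊆ ⋃ A ∈ T, {ω | ∑ e ∈ EA A, Z e ω ≤ ((EA A).card : ℝ) * p / 2} := by
    rintro ω ⟨A, h1, h2, h3⟩
    rw [hthr A, crossEdges_sum] at h3
    exact Set.mem_iUnion₂.mpr ⟨A, Finset.mem_filter.mpr ⟨Finset.mem_univ _, h1, h2⟩,
      le_of_lt h3⟩
  -- common bound for every valid A
  have hbnd : ∀ A ∈ T,
      μ {ω | ∑ e ∈ EA A, Z e ω ≤ ((EA A).card : ℝ) * p / 2}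
        ≤ ENNReal.ofReal (Real.exp (-c * ((21/100) * (m:ℝ)^2 * p))) := by
    intro A hA
    refine (key A).trans (ENNReal.ofReal_le_ofReal (Real.exp_le_exp.mpr ?_))
    simp only [hT, Finset.mem_filter] at hA
    obtain ⟨-, hA1, hA2⟩ := hA
    have hk1 : (3/10 : ℝ) * m ≤ A.card := (le_div_iff₀ hm0).mp hA1
    have hk2 : (A.card : ℝ) ≤ (7/10) * m := by
      have := (div_le_iff₀ hm0).mp hA2
      linarith
    have hnlow : (21/100) * (m:ℝ)^2 ≤ ((EA A).card : ℝ) := by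
      rw [hEAcard]
      nlinarith
    have hc0 : 0 ≤ c := le_trans (by norm_num) hc13
    have hmm := mul_le_mul_of_nonneg_left (mul_le_mul_of_nonneg_right hnlow hp0.le) hc0
    nlinarith [hmm]
  -- assemble
  calc μ {ω | ∃ A : Finset (Fin m),
        (3/10 : ℝ) ≤ (A.card : ℝ) / m ∧ (A.card : ℝ) / m ≤ 1 - 3/10 ∧
        (crossEdges X A ω : ℝ) <
          ((A.card : ℝ) / m) * (1 - (A.card : ℝ) / m) * a ^ 2 * Pr * N / 32}
      ≤ μ (⋃ A ∈ T, {ω | ∑ e ∈ EA A, Z e ω ≤ ((EA A).card : ℝ) * p / 2}) :=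
        measure_mono hsub
    _ ≤ ∑ A ∈ T, μ {ω | ∑ e ∈ EA A, Z e ω ≤ ((EA A).card : ℝ) * p / 2} :=
        measure_biUnion_finset_le T _
    _ ≤ ∑ _A ∈ T, ENNReal.ofReal (Real.exp (-c * ((21/100) * (m:ℝ)^2 * p))) :=
        Finset.sum_le_sum hbnd
    _ = (T.card : ℝ≥0∞) * ENNReal.ofReal (Real.exp (-c * ((21/100) * (m:ℝ)^2 * p))) := by
        rw [Finset.sum_const, nsmul_eq_mul]
    _ ≤ (2^m : ℝ≥0∞) * ENNReal.ofReal (Real.exp (-c * ((21/100) * (m:ℝ)^2 * p))) := by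
        gcongr
        have : T.card ≤ 2^m := by
          calc T.card ≤ (Finset.univ : Finset (Finset (Fin m))).card :=
                Finset.card_filter_le _ _
            _ = 2^m := by simp [Finset.card_univ, Fintype.card_finset]
        exact_mod_cast this
    _ = ENNReal.ofReal ((2:ℝ)^m * Real.exp (-c * ((21/100) * (m:ℝ)^2 * p))) := by
        rw [ENNReal.ofReal_mul (by positivity), ENNReal.ofReal_pow (by norm_num)]
        norm_num
    _ ≤ ENNReal.ofReal (N * Real.exp (-(3/10) * a * N / 4)) := by
        apply ENNReal.ofReal_le_ofReal
        have hN1 : (1:ℝ) ≤ N := by exact_mod_cast hN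
        have hmp : (m:ℝ) * p = a * Pr / 4 := by
          rw [hp, hmN]; field_simp
        have h64 : 64 < (m:ℝ) * p := by rw [hmp]; linarith
        have h2m : (2:ℝ)^m = Real.exp (m * Real.log 2) := by
          rw [Real.exp_nat_mul, Real.exp_log two_pos]
        rw [h2m, ← Real.exp_add]
        calc Real.exp ((m:ℝ) * Real.log 2 + -c * ((21/100) * (m:ℝ)^2 * p))
            ≤ Real.exp (-(3/10) * a * N / 4) := by
              apply Real.exp_le_exp.mpr
              have hEend : -(3/10) * a * (N:ℝ) / 4 = -(3/10) * m := by
                rw [hmN]; ring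
              rw [hEend]
              have hlog : Real.log 2 ≤ 0.7 := by
                linarith [Real.log_two_lt_d9]
              have hX0 : (0:ℝ) ≤ 21/100 * (m:ℝ)^2 * p := by positivity
              have hc1 : (13/100) * (21/100 * (m:ℝ)^2 * p)
                  ≤ c * (21/100 * (m:ℝ)^2 * p) :=
                mul_le_mul_of_nonneg_right hc13 hX0
              have h2 : 64 * (m:ℝ) ≤ (m:ℝ)^2 * p := by nlinarith
              have hml : (m:ℝ) * Real.log 2 ≤ 0.7 * m := by nlinarith
              nlinarith [hc1, h2, hml]
          _ ≤ N * Real.exp (-(3/10) * a * N / 4) := by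
              nlinarith [Real.exp_pos (-(3/10) * a * (N:ℝ) / 4)]
  -- end
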